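/- Let (A, m) be a local ring, M an A-module, N a finitely generated A-module supported on {m}, and f ∈ m an M-regular element. Define τ_N(M) as the supremum of n such that Ext_A^i(N, M) = 0 for all i < n. Then τ_N(M) = τ_N(M/fM) + 1. -/

import Mathlib

open CategoryTheory

/-- `extTau A N M` is the supremum of `n` such that `Ext_A^i(N, M) = 0` for all `i < n`. -/
noncomputable def extTau (A : Type) [CommRing A] (N M : ModuleCat.{0} A) : ℕ∞ :=
  sSup {n : ℕ∞ | ∀ i : ℕ, (i : ℕ∞) < n →
    Subsingleton (((Ext A (ModuleCat.{0} A) i).obj (Opposite.op N)).obj M)}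

section AuxChase

open CategoryTheory Limits HomologicalComplex

section ModHelpers

variable {A : Type} [CommRing A] {M : Type} [AddCommGroup M] [Module A M]
  {f : A} (hreg : ∀ x : M, f • x = 0 → x = 0)

include hreg in
lemma pow_reg (k : ℕ) : ∀ x : M, f ^ k • x = 0 → x = 0 := by
  induction k with
  | zero => intro x hx; simpa using hx
  | succ n ih =>
    intro x hx
    rw [pow_succ, mul_comm, mul_smul] at hx
    exact ih x (hreg _ hx)

include hreg in
lemma f_cancel {y y' : M} (h : f • y = f • y') : y = y' :=
  sub_eq_zero.mp (hreg (y - y') (by rw [smul_sub, h, sub_self]))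

include hreg in
lemma div_by_f {V : Type} [AddCommGroup V] [Module A V] (g : V →ₗ[A] M)
    (h : ∀ x, ∃ y, g x = f • y) : ∃ θ : V →ₗ[A] M, ∀ x, f • θ x = g x := by
  have hinj : ∀ y y' : M, f • y = f • y' → y = y' := fun y y' hyy =>
    sub_eq_zero.mp (hreg (y - y') (by rw [smul_sub, hyy, sub_self]))
  choose t ht using h
  refine ⟨⟨⟨t, ?_⟩, ?_⟩, fun x => (ht x).symm⟩
  · intro x y
    apply hinj
    rw [smul_add, ← ht, ← ht, ← ht, map_add]
  · intro a x
    apply hinj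
    rw [← ht, map_smul, ht, RingHom.id_apply, smul_comm]

include hreg in
lemma div_by_f' {V : ModuleCat A} (g : V ⟶ ModuleCat.of A M)
    (h : ∀ x, ∃ y : M, g x = f • y) :
    ∃ θ : V ⟶ ModuleCat.of A M, ∀ x, f • θ x = g x := by
  obtain ⟨θ₀, hθ₀⟩ := div_by_f hreg g.hom h
  exact ⟨ModuleCat.ofHom θ₀, hθ₀⟩

end ModHelpers

section Chase

variable {A : Type} [CommRing A] {N : Type} [AddCommGroup N] [Module A N]
  (P : ProjectiveResolution (ModuleCat.of A N))

lemma ch_succ_iff (Y : ModuleCat.{0} A) (i : ℕ) :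
    (P.complex.linearYonedaObj A Y).ExactAt (i + 1) ↔
    ∀ φ : P.complex.X (i + 1) ⟶ Y, P.complex.d (i + 2) (i + 1) ≫ φ = 0 →
      ∃ ψ : P.complex.X i ⟶ Y, P.complex.d (i + 1) i ≫ ψ = φ := by
  rw [HomologicalComplex.exactAt_iff' _ i (i + 1) (i + 2)
    (by simp) (by simp), ShortComplex.moduleCat_exact_iff]
  exact Iff.rfl

lemma ch_zero_iff (Y : ModuleCat.{0} A) :
    (P.complex.linearYonedaObj A Y).ExactAt 0 ↔
    ∀ φ : P.complex.X 0 ⟶ Y, P.complex.d 1 0 ≫ φ = 0 → φ = 0 := by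
  rw [HomologicalComplex.exactAt_iff' _ 0 0 1
    (by simp) (by simp), ShortComplex.moduleCat_exact_iff]
  simp only [shortComplexFunctor'_obj_X₁, shortComplexFunctor'_obj_X₂,
    shortComplexFunctor'_obj_X₃, shortComplexFunctor'_obj_f, shortComplexFunctor'_obj_g]
  constructor
  · intro h φ hφ
    obtain ⟨ψ, hψ⟩ := h φ hφ
    rw [← hψ]
    have h0 : (P.complex.linearYonedaObj A Y).d 0 0 = 0 :=
      HomologicalComplex.shape _ _ _ (by simp)
    rw [h0]
    rfl
  · intro h φ hφ
    exact ⟨φ, by rw [h φ hφ]; rfl⟩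

lemma res_exact (i : ℕ) (x : P.complex.X (i + 1)) (hx : P.complex.d (i + 1) i x = 0) :
    ∃ y, P.complex.d (i + 2) (i + 1) y = x := by
  have h := P.exact_succ i
  rw [ShortComplex.moduleCat_exact_iff] at h
  exact h x hx

lemma res_exact0 (x : P.complex.X 0) (hx : P.π.f 0 x = 0) :
    ∃ y, P.complex.d 1 0 y = x := by
  have h : (ShortComplex.mk (P.complex.d 1 0) (P.π.f 0)
      P.complex_d_comp_π_f_zero).Exact :=
    ShortComplex.exact_of_g_is_cokernel _ P.isColimitCokernelCofork
  rw [ShortComplex.moduleCat_exact_iff] at h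
  exact h x hx

variable {f : A} {k : ℕ} (hk : ∀ n : N, f ^ k • n = 0)

include hk in
lemma pi0_smul (x : P.complex.X 0) : P.π.f 0 (f ^ k • x) = 0 := by
  set e := HomologicalComplex.singleObjXSelf (ComplexShape.down ℕ) 0 (ModuleCat.of A N) with he
  have hinj : Function.Injective e.hom := (ModuleCat.mono_iff_injective e.hom).mp inferInstance
  apply hinj
  rw [map_zero, map_smul, map_smul]
  exact hk _

end Chase

section Homotopy

variable {A : Type} [CommRing A] {N : Type} [AddCommGroup N] [Module A N]
  (P : ProjectiveResolution (ModuleCat.of A N))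
  {f : A} {k : ℕ} (hk : ∀ n : N, f ^ k • n = 0)

/-- multiplication by `f ^ k` as a chain map on the resolution -/
noncomputable def gmap : P.complex ⟶ P.complex where
  f i := f ^ k • 𝟙 _
  comm' i j hij := by
    rw [CategoryTheory.Linear.smul_comp, CategoryTheory.Linear.comp_smul,
      Category.id_comp, Category.comp_id]

include hk in
lemma gmap_pi : gmap P (f := f) (k := k) ≫ P.π = 0 := by
  apply HomologicalComplex.hom_ext
  intro i
  match i with
  | 0 =>
    apply ModuleCat.hom_ext; apply LinearMap.ext
    intro x
    have : ((gmap P (f := f) (k := k)) ≫ P.π).f 0 x = P.π.f 0 (f ^ k • x) := rfl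
    rw [this, pi0_smul P hk x]
    rfl
  | (j + 1) =>
    exact (HomologicalComplex.isZero_single_obj_X (ComplexShape.down ℕ) 0
      (ModuleCat.of A N) (j + 1) (by simp)).eq_of_tgt _ _

/-- the null-homotopy of multiplication by `f ^ k` -/
noncomputable def nulh : Homotopy (gmap P (f := f) (k := k)) 0 :=
  ProjectiveResolution.liftHomotopyZero _ (gmap_pi P hk)

include hk in
lemma smul_cocycle_boundary (Y : ModuleCat.{0} A) (i : ℕ) (φ : P.complex.X (i + 1) ⟶ Y)
    (hφ : P.complex.d (i + 2) (i + 1) ≫ φ = 0) :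
    ∃ ψ : P.complex.X i ⟶ Y, P.complex.d (i + 1) i ≫ ψ = f ^ k • φ := by
  set h := nulh P hk with hh
  have hcomm := h.comm (i + 1)
  rw [dNext_eq h.hom (show (ComplexShape.down ℕ).Rel (i+1) i by simp),
    prevD_eq h.hom (show (ComplexShape.down ℕ).Rel (i+2) (i+1) by simp)] at hcomm
  have : (gmap P (f := f) (k := k)).f (i+1) = f ^ k • 𝟙 _ := rfl
  rw [this] at hcomm
  refine ⟨h.hom i (i + 1) ≫ φ, ?_⟩
  calc P.complex.d (i + 1) i ≫ (h.hom i (i + 1) ≫ φ)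
      = (P.complex.d (i + 1) i ≫ h.hom i (i + 1)) ≫ φ := by rw [Category.assoc]
    _ = (f ^ k • 𝟙 _ - h.hom (i+1) (i+2) ≫ P.complex.d (i + 2) (i + 1)) ≫ φ := by
        have h0 : (0 : P.complex ⟶ P.complex).f (i + 1) = 0 := rfl
        rw [h0, add_zero] at hcomm
        congr 1
        rw [eq_sub_iff_add_eq]
        exact hcomm.symm
    _ = f ^ k • φ := by
        rw [Preadditive.sub_comp, CategoryTheory.Linear.smul_comp, Category.id_comp,
          Category.assoc, hφ, Limits.comp_zero, sub_zero]

end Homotopy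

section Claims

variable {A : Type} [CommRing A] {N : Type} [AddCommGroup N] [Module A N]
  (P : ProjectiveResolution (ModuleCat.of A N))
  {M : Type} [AddCommGroup M] [Module A M] {f : A}
  (hreg : ∀ x : M, f • x = 0 → x = 0) {k : ℕ} (hk : ∀ n : N, f ^ k • n = 0)

lemma q_ker {x : M} (hx : (Ideal.span {f} • (⊤ : Submodule A M)).mkQ x = 0) :
    ∃ y : M, x = f • y := by
  rw [Submodule.mkQ_apply, Submodule.Quotient.mk_eq_zero,
    Submodule.ideal_span_singleton_smul, ← SetLike.mem_coe,
    Submodule.coe_pointwise_smul] at hx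
  obtain ⟨y, -, rfl⟩ := hx
  exact ⟨y, rfl⟩

lemma q_f (x : M) : (Ideal.span {f} • (⊤ : Submodule A M)).mkQ (f • x) = 0 := by
  rw [Submodule.mkQ_apply, Submodule.Quotient.mk_eq_zero,
    Submodule.ideal_span_singleton_smul]
  exact Submodule.smul_mem_pointwise_smul _ _ _ trivial

include hreg hk in
lemma claimA : (P.complex.linearYonedaObj A (ModuleCat.of A M)).ExactAt 0 := by
  rw [ch_zero_iff]
  intro φ hφ
  apply ModuleCat.hom_ext; apply LinearMap.ext
  intro x
  show φ x = 0
  apply pow_reg hreg k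
  have hms : f ^ k • φ x = φ (f ^ k • x) := (map_smul φ.hom _ _).symm
  rw [hms]
  obtain ⟨y, hy⟩ := res_exact0 P (f ^ k • x) (pi0_smul P hk x)
  rw [← hy]
  have h2 := ConcreteCategory.congr_hom hφ y
  simpa using h2

include hreg hk in
lemma claimB_zero
    (h0 : (P.complex.linearYonedaObj A (ModuleCat.of A M)).ExactAt 0)
    (h1 : (P.complex.linearYonedaObj A (ModuleCat.of A M)).ExactAt 1) :
    (P.complex.linearYonedaObj A
      (ModuleCat.of A (M ⧸ (Ideal.span {f} • (⊤ : Submodule A M))))).ExactAt 0 := by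
  rw [ch_zero_iff] at h0 ⊢
  rw [show (1 : ℕ) = 0 + 1 from rfl, ch_succ_iff] at h1
  intro φ hφ
  set q : ModuleCat.of A M ⟶ ModuleCat.of A (M ⧸ (Ideal.span {f} • (⊤ : Submodule A M))) :=
    ModuleCat.ofHom (Ideal.span {f} • (⊤ : Submodule A M)).mkQ with hq
  haveI : Epi q := (ModuleCat.epi_iff_surjective q).mpr (Submodule.mkQ_surjective _)
  set φt : P.complex.X 0 ⟶ ModuleCat.of A M := Projective.factorThru φ q with hφt
  have hfac : φt ≫ q = φ := Projective.factorThru_comp _ _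
  have hdiv : ∀ x : P.complex.X 1, ∃ y : M, (P.complex.d 1 0 ≫ φt) x = f • y := by
    intro x
    apply q_ker (f := f)
    have h3 : (Ideal.span {f} • (⊤ : Submodule A M)).mkQ ((P.complex.d 1 0 ≫ φt) x)
        = (P.complex.d 1 0 ≫ φ) x := by rw [← hfac]; rfl
    rw [h3, hφ]; rfl
  obtain ⟨θ, hθ⟩ := div_by_f' hreg (P.complex.d 1 0 ≫ φt) hdiv
  have hθc : P.complex.d 2 1 ≫ θ = 0 := by
    apply ModuleCat.hom_ext; apply LinearMap.ext; intro z
    apply hreg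
    show f • θ (P.complex.d 2 1 z) = 0
    rw [hθ]
    have h4 : (P.complex.d 1 0 ≫ φt) (P.complex.d 2 1 z)
        = ((P.complex.d 2 1 ≫ P.complex.d 1 0) ≫ φt) z := rfl
    rw [h4, P.complex.d_comp_d, Limits.zero_comp]
    rfl
  obtain ⟨χ, hχ⟩ := h1 θ hθc
  have hη : φt - f • χ = 0 := by
    apply h0
    apply ModuleCat.hom_ext; apply LinearMap.ext; intro x
    show φt (P.complex.d 1 0 x) - f • χ (P.complex.d 1 0 x) = 0
    have h5 : χ (P.complex.d 1 0 x) = θ x := ConcreteCategory.congr_hom hχ x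
    have h6 : φt (P.complex.d 1 0 x) = (P.complex.d 1 0 ≫ φt) x := rfl
    rw [h5, h6, hθ, sub_self]
  have hfc : φt = f • χ := by rwa [sub_eq_zero] at hη
  apply ModuleCat.hom_ext; apply LinearMap.ext; intro x
  show φ x = 0
  rw [← hfac]
  show q (φt x) = 0
  rw [hfc]
  show q (f • χ x) = 0
  exact q_f _
include hreg hk in
lemma claimB_succ (i : ℕ)
    (h0 : (P.complex.linearYonedaObj A (ModuleCat.of A M)).ExactAt (i + 1))
    (h1 : (P.complex.linearYonedaObj A (ModuleCat.of A M)).ExactAt (i + 2)) :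
    (P.complex.linearYonedaObj A
      (ModuleCat.of A (M ⧸ (Ideal.span {f} • (⊤ : Submodule A M))))).ExactAt (i + 1) := by
  rw [ch_succ_iff] at h0 ⊢
  rw [show i + 2 = (i + 1) + 1 from rfl, ch_succ_iff] at h1
  intro φ hφ
  set q : ModuleCat.of A M ⟶ ModuleCat.of A (M ⧸ (Ideal.span {f} • (⊤ : Submodule A M))) :=
    ModuleCat.ofHom (Ideal.span {f} • (⊤ : Submodule A M)).mkQ with hq
  haveI : Epi q := (ModuleCat.epi_iff_surjective q).mpr (Submodule.mkQ_surjective _)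
  set φt : P.complex.X (i + 1) ⟶ ModuleCat.of A M := Projective.factorThru φ q with hφt
  have hfac : φt ≫ q = φ := Projective.factorThru_comp _ _
  have hdiv : ∀ x : P.complex.X (i + 2), ∃ y : M,
      (P.complex.d (i + 2) (i + 1) ≫ φt) x = f • y := by
    intro x
    apply q_ker (f := f)
    have h3 : (Ideal.span {f} • (⊤ : Submodule A M)).mkQ
        ((P.complex.d (i + 2) (i + 1) ≫ φt) x)
        = (P.complex.d (i + 2) (i + 1) ≫ φ) x := by rw [← hfac]; rfl
    rw [h3, hφ]; rfl
  obtain ⟨θ, hθ⟩ := div_by_f' hreg (P.complex.d (i + 2) (i + 1) ≫ φt) hdiv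
  have hθc : P.complex.d (i + 3) (i + 2) ≫ θ = 0 := by
    apply ModuleCat.hom_ext; apply LinearMap.ext; intro z
    apply hreg
    show f • θ (P.complex.d (i + 3) (i + 2) z) = 0
    rw [hθ]
    have h4 : (P.complex.d (i + 2) (i + 1) ≫ φt) (P.complex.d (i + 3) (i + 2) z)
        = ((P.complex.d (i + 3) (i + 2) ≫ P.complex.d (i + 2) (i + 1)) ≫ φt) z := rfl
    rw [h4, P.complex.d_comp_d, Limits.zero_comp]
    rfl
  obtain ⟨χ, hχ⟩ := h1 θ hθc
  obtain ⟨ψt, hψt⟩ := h0 (φt - f • χ) (by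
    apply ModuleCat.hom_ext; apply LinearMap.ext; intro x
    show φt (P.complex.d (i + 2) (i + 1) x) - f • χ (P.complex.d (i + 2) (i + 1) x) = 0
    have h5 : χ (P.complex.d (i + 2) (i + 1) x) = θ x := ConcreteCategory.congr_hom hχ x
    have h6 : φt (P.complex.d (i + 2) (i + 1) x)
        = (P.complex.d (i + 2) (i + 1) ≫ φt) x := rfl
    rw [h5, h6, hθ, sub_self])
  refine ⟨ψt ≫ q, ?_⟩
  apply ModuleCat.hom_ext; apply LinearMap.ext; intro x
  show q (ψt (P.complex.d (i + 1) i x)) = φ x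
  have h7 : ψt (P.complex.d (i + 1) i x) = φt x - f • χ x := ConcreteCategory.congr_hom hψt x
  rw [h7, map_sub]
  have h8 : q (f • χ x) = 0 := q_f _
  rw [h8, sub_zero, ← hfac]
  rfl

include hreg hk in
lemma claimC (i : ℕ)
    (hq : (P.complex.linearYonedaObj A
      (ModuleCat.of A (M ⧸ (Ideal.span {f} • (⊤ : Submodule A M))))).ExactAt i) :
    (P.complex.linearYonedaObj A (ModuleCat.of A M)).ExactAt (i + 1) := by
  rw [ch_succ_iff]
  intro φ hφ
  set q : ModuleCat.of A M ⟶ ModuleCat.of A (M ⧸ (Ideal.span {f} • (⊤ : Submodule A M))) :=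
    ModuleCat.ofHom (Ideal.span {f} • (⊤ : Submodule A M)).mkQ with hqdef
  haveI : Epi q := (ModuleCat.epi_iff_surjective q).mpr (Submodule.mkQ_surjective _)
  have step : ∀ m : ℕ,
      (∃ ψ, P.complex.d (i + 1) i ≫ ψ = f ^ (m + 1) • φ) →
      (∃ ψ, P.complex.d (i + 1) i ≫ ψ = f ^ m • φ) := by
    intro m ⟨ψ, hψ⟩
    have hψ' : P.complex.d (i + 1) i ≫ ψ = f • (f ^ m • φ) := by
      rw [hψ, ← mul_smul, ← pow_succ']
    -- ψ ≫ q is a cocycle at degree i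
    have hcoc : P.complex.d (i + 1) i ≫ (ψ ≫ q) = 0 := by
      apply ModuleCat.hom_ext; apply LinearMap.ext; intro x
      show q (ψ (P.complex.d (i + 1) i x)) = 0
      have h1 : ψ (P.complex.d (i + 1) i x) = f • ((f ^ m • φ) x) :=
        ConcreteCategory.congr_hom hψ' x
      rw [h1]
      exact q_f _
    cases i with
    | zero =>
      rw [ch_zero_iff] at hq
      have hz := hq (ψ ≫ q) hcoc
      have hdiv : ∀ x, ∃ y : M, ψ x = f • y := by
        intro x
        apply q_ker (f := f)
        exact ConcreteCategory.congr_hom hz x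
      obtain ⟨θ, hθ⟩ := div_by_f' hreg ψ hdiv
      refine ⟨θ, ?_⟩
      apply ModuleCat.hom_ext; apply LinearMap.ext; intro x
      apply f_cancel hreg
      show f • θ (P.complex.d 1 0 x) = f • ((f ^ m • φ) x)
      rw [hθ]
      exact ConcreteCategory.congr_hom hψ' x
    | succ j =>
      rw [ch_succ_iff] at hq
      obtain ⟨χb, hχb⟩ := hq (ψ ≫ q) hcoc
      set χ : P.complex.X j ⟶ ModuleCat.of A M := Projective.factorThru χb q with hχdef
      have hcfac : χ ≫ q = χb := Projective.factorThru_comp _ _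
      have hdiv : ∀ x, ∃ y : M, (ψ - P.complex.d (j + 1) j ≫ χ) x = f • y := by
        intro x
        apply q_ker (f := f)
        show q (ψ x - χ (P.complex.d (j + 1) j x)) = 0
        rw [map_sub]
        have h2 : q (χ (P.complex.d (j + 1) j x)) = χb (P.complex.d (j + 1) j x) := by
          rw [← hcfac]; rfl
        have h3 : χb (P.complex.d (j + 1) j x) = q (ψ x) := ConcreteCategory.congr_hom hχb x
        rw [h2, h3, sub_self]
      obtain ⟨θ, hθ⟩ := div_by_f' hreg (ψ - P.complex.d (j + 1) j ≫ χ) hdiv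
      refine ⟨θ, ?_⟩
      apply ModuleCat.hom_ext; apply LinearMap.ext; intro x
      apply f_cancel hreg
      show f • θ (P.complex.d (j + 2) (j + 1) x) = f • ((f ^ m • φ) x)
      rw [hθ]
      show ψ (P.complex.d (j + 2) (j + 1) x)
        - χ (P.complex.d (j + 1) j (P.complex.d (j + 2) (j + 1) x)) = f • ((f ^ m • φ) x)
      have h4 : P.complex.d (j + 1) j (P.complex.d (j + 2) (j + 1) x)
          = ((P.complex.d (j + 2) (j + 1) ≫ P.complex.d (j + 1) j)) x := rfl
      rw [h4, P.complex.d_comp_d]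
      have h5 : ψ (P.complex.d (j + 2) (j + 1) x) = f • ((f ^ m • φ) x) :=
        ConcreteCategory.congr_hom hψ' x
      rw [h5]
      show f • ((f ^ m • φ) x) - χ 0 = f • ((f ^ m • φ) x)
      rw [map_zero, sub_zero]
  have base : ∃ ψ, P.complex.d (i + 1) i ≫ ψ = f ^ k • φ :=
    smul_cocycle_boundary P hk _ i φ hφ
  have H : ∀ m : ℕ, (∃ ψ, P.complex.d (i + 1) i ≫ ψ = f ^ m • φ) →
      (∃ ψ, P.complex.d (i + 1) i ≫ ψ = f ^ 0 • φ) := by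
    intro m
    induction m with
    | zero => exact id
    | succ n ih => exact fun h => ih (step n h)
  obtain ⟨ψ, hψ⟩ := H k base
  exact ⟨ψ, by rwa [pow_zero, one_smul] at hψ⟩

end Claims

section Assemble

open Opposite

variable {A : Type} [CommRing A] {N : Type} [AddCommGroup N] [Module A N]

lemma subsingleton_of_isZero {X : ModuleCat A} (h : Limits.IsZero X) : Subsingleton X := by
  refine ⟨fun a b => ?_⟩
  have h1 : (𝟙 X : X ⟶ X) = 0 := h.eq_of_src _ _
  have ha : a = (𝟙 X : X ⟶ X) a := rfl
  have hb : b = (𝟙 X : X ⟶ X) b := rfl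
  rw [ha, hb, h1]
  rfl

lemma subsing_iff (P : ProjectiveResolution (ModuleCat.of A N)) (Y : ModuleCat.{0} A) (i : ℕ) :
    Subsingleton (((Ext A (ModuleCat.{0} A) i).obj (op (ModuleCat.of A N))).obj Y) ↔
      (P.complex.linearYonedaObj A Y).ExactAt i := by
  rw [HomologicalComplex.exactAt_iff_isZero_homology]
  constructor
  · intro hs
    haveI := ((P.isoExt i Y).toLinearEquiv.toEquiv.subsingleton_congr).mp hs
    exact ModuleCat.isZero_of_subsingleton _
  · intro hz
    exact ((P.isoExt i Y).toLinearEquiv.toEquiv.subsingleton_congr).mpr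
      (subsingleton_of_isZero hz)

end Assemble

end AuxChase

/-- For a local ring `A`, a finitely generated module `N` supported on the closed point,
and an `M`-regular element `f ∈ 𝔪`, one has `τ_N(M) = τ_N(M/fM) + 1`. -/
theorem stmt_5 (A : Type) [CommRing A] [IsLocalRing A]
    (M N : Type) [AddCommGroup M] [Module A M] [AddCommGroup N] [Module A N]
    [Module.Finite A N]
    (hN : Module.support A N = {IsLocalRing.closedPoint A})
    (f : A) (hf : f ∈ IsLocalRing.maximalIdeal A)
    (hreg : ∀ x : M, f • x = 0 → x = 0) :
    extTau A (ModuleCat.of A N) (ModuleCat.of A M)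
      = extTau A (ModuleCat.of A N)
          (ModuleCat.of A (M ⧸ (Ideal.span {f} • (⊤ : Submodule A M)))) + 1 := by
  classical
  -- find k with f ^ k annihilating N
  have hrad : f ∈ (Module.annihilator A N).radical := by
    rw [Ideal.radical_eq_sInf]
    refine Ideal.mem_sInf.mpr ?_
    rintro p ⟨hle, hp⟩
    have hmem : (⟨p, hp⟩ : PrimeSpectrum A) ∈ Module.support A N := by
      rw [Module.support_eq_zeroLocus]
      exact hle
    rw [hN, Set.mem_singleton_iff] at hmem
    have : p = IsLocalRing.maximalIdeal A := congrArg PrimeSpectrum.asIdeal hmem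
    rw [this]
    exact hf
  obtain ⟨k, hkann⟩ := Ideal.mem_radical_iff.mp hrad
  have hk : ∀ n : N, f ^ k • n = 0 := fun n => Module.mem_annihilator.mp hkann n
  -- a projective resolution of N
  have hPR : HasProjectiveResolution (ModuleCat.of A N) := inferInstance
  obtain ⟨P⟩ := hPR.out
  -- translate τ to exactness of the Hom complex
  have e1 : {n : ℕ∞ | ∀ i : ℕ, (i : ℕ∞) < n →
      Subsingleton (((Ext A (ModuleCat.{0} A) i).obj
        (Opposite.op (ModuleCat.of A N))).obj (ModuleCat.of A M))} =
      {n : ℕ∞ | ∀ i : ℕ, (i : ℕ∞) < n →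
        (P.complex.linearYonedaObj A (ModuleCat.of A M)).ExactAt i} := by
    ext n
    exact forall_congr' fun i => imp_congr Iff.rfl (subsing_iff P _ i)
  have e2 : {n : ℕ∞ | ∀ i : ℕ, (i : ℕ∞) < n →
      Subsingleton (((Ext A (ModuleCat.{0} A) i).obj
        (Opposite.op (ModuleCat.of A N))).obj
          (ModuleCat.of A (M ⧸ (Ideal.span {f} • (⊤ : Submodule A M)))))} =
      {n : ℕ∞ | ∀ i : ℕ, (i : ℕ∞) < n →
        (P.complex.linearYonedaObj A
          (ModuleCat.of A (M ⧸ (Ideal.span {f} • (⊤ : Submodule A M))))).ExactAt i} := by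
    ext n
    exact forall_congr' fun i => imp_congr Iff.rfl (subsing_iff P _ i)
  show sSup _ = sSup _ + 1
  rw [e1, e2]
  set SM := {n : ℕ∞ | ∀ i : ℕ, (i : ℕ∞) < n →
    (P.complex.linearYonedaObj A (ModuleCat.of A M)).ExactAt i} with hSM
  set SQ := {n : ℕ∞ | ∀ i : ℕ, (i : ℕ∞) < n →
    (P.complex.linearYonedaObj A
      (ModuleCat.of A (M ⧸ (Ideal.span {f} • (⊤ : Submodule A M))))).ExactAt i} with hSQ
  -- the key equivalence
  have key : ∀ n : ℕ∞,
      (∀ i : ℕ, (i : ℕ∞) < n + 1 →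
        (P.complex.linearYonedaObj A (ModuleCat.of A M)).ExactAt i) ↔
      (∀ i : ℕ, (i : ℕ∞) < n →
        (P.complex.linearYonedaObj A
          (ModuleCat.of A (M ⧸ (Ideal.span {f} • (⊤ : Submodule A M))))).ExactAt i) := by
    intro n
    constructor
    · intro h i hi
      have hi1 : (i : ℕ∞) < n + 1 := lt_of_lt_of_le hi le_self_add
      have hi2 : ((i + 1 : ℕ) : ℕ∞) < n + 1 := by
        push_cast
        exact (ENat.add_lt_add_iff_right (by simp)).mpr hi
      cases i with
      | zero => exact claimB_zero P hreg hk (h 0 hi1) (h 1 hi2)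
      | succ j => exact claimB_succ P hreg hk j (h (j + 1) hi1) (h (j + 2) hi2)
    · intro h i hi
      cases i with
      | zero => exact claimA P hreg hk
      | succ j =>
        refine claimC P hreg hk j (h j ?_)
        have : ((j + 1 : ℕ) : ℕ∞) = (j : ℕ∞) + 1 := by push_cast; ring
        rw [this] at hi
        exact (ENat.add_lt_add_iff_right (by simp)).mp hi
  apply le_antisymm
  · apply sSup_le
    intro n hn
    rcases eq_or_ne n 0 with rfl | hn0
    · exact zero_le
    · have h1n : 1 ≤ n := ENat.one_le_iff_ne_zero.mpr hn0
      have hc : n - 1 + 1 = n := tsub_add_cancel_of_le h1n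
      rw [← hc]
      refine add_le_add_left (le_sSup ?_) 1
      show n - 1 ∈ SQ
      refine (key (n - 1)).mp ?_
      rw [hc]
      exact hn
  · refine le_sSup ?_
    show sSup SQ + 1 ∈ SM
    intro i hi
    have hi' : (i : ℕ∞) < sSup SQ + 1 := hi
    refine (key (sSup SQ)).mpr ?_ i hi'
    intro j hj
    obtain ⟨b, hbS, hjb⟩ := lt_sSup_iff.mp hj
    exact hbS j hjb
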